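/- In the setting of the cumulatively bounded noise description, assume: (i) Δ_1 ⪰ 0 (positive semidefinite); (ii) the data is consistent with a ground-truth system, i.e., there exists A_gt ∈ ℝ^{n×ℓ} and D̃ = [d̃_1 ⋯ d̃_D] ∈ ℝ^{n×D} with [D̃^T; I_n]^T [[Δ_1, Δ_2],[Δ_2^T, Δ_3]] [D̃^T; I_n] ≺ 0 and x̃_i^+ = A_gt z(x̃_i, ũ_i) + d̃_i for all i; and (iii) the matrix [[−Δ̃_1, Δ̃_2],[Δ̃_2^T, −Δ̃_3]] ∈ ℝ^{(ℓ+n)×(ℓ+n)} is invertible, with inverse denoted [[Δ̄_1, Δ̄_2],[Δ̄_2^T, Δ̄_3]]. Then for every A ∈ ℝ^{n×ℓ}: [A^T; I_n]^T [[Δ̃_1, Δ̃_2],[Δ̃_2^T, Δ̃_3]] [A^T; I_n] ≺ 0 holds if and only if [I_ℓ; A]^T [[Δ̄_1, Δ̄_2],[Δ̄_2^T, Δ̄_3]] [I_ℓ; A] ≺ 0, where [I_ℓ; A] is the (ℓ+n)×ℓ matrix obtained by stacking I_ℓ on top of A. Moreover Δ̄_3 ⪰ 0. -/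

import Mathlib

open Matrix

set_option linter.unusedSectionVars false
set_option maxHeartbeats 1600000

namespace Stmt6Aux

lemma dot_mv {ι κ : Type*} [Fintype ι] [Fintype κ] (M : Matrix ι κ ℝ) (v : ι → ℝ) (w : κ → ℝ) :
    v ⬝ᵥ (M *ᵥ w) = (Mᵀ *ᵥ v) ⬝ᵥ w := by
  rw [dotProduct_mulVec, ← vecMul_transpose, transpose_transpose]

lemma swap_mv {ι κ : Type*} [Fintype ι] [Fintype κ] (M : Matrix ι κ ℝ) (v : ι → ℝ) (w : κ → ℝ) :
    v ⬝ᵥ (M *ᵥ w) = w ⬝ᵥ (Mᵀ *ᵥ v) := by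
  rw [dot_mv, dotProduct_comm]

lemma sandwich_dot {ι κ κ' : Type*} [Fintype ι] [Fintype κ] [Fintype κ'] (M : Matrix ι ι ℝ)
    (V : Matrix ι κ ℝ) (W : Matrix ι κ' ℝ) (c : κ → ℝ) (d : κ' → ℝ) :
    (V *ᵥ c) ⬝ᵥ (M *ᵥ (W *ᵥ d)) = c ⬝ᵥ ((Vᵀ * M * W) *ᵥ d) := by
  have h : (Vᵀ * M * W) *ᵥ d = Vᵀ *ᵥ (M *ᵥ (W *ᵥ d)) := by
    rw [mulVec_mulVec, mulVec_mulVec, Matrix.mul_assoc]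
  rw [h, dot_mv Vᵀ, transpose_transpose]

variable {ι : Type*} [Fintype ι] [DecidableEq ι]

/-- The coordinate-inclusion linear map for a finset `s`. -/
def coordMap (s : Finset ι) : (({i // i ∈ s}) → ℝ) →ₗ[ℝ] (ι → ℝ) where
  toFun c := fun i => if h : i ∈ s then c ⟨i, h⟩ else 0
  map_add' c d := by funext i; by_cases h : i ∈ s <;> simp [h]
  map_smul' r c := by funext i; by_cases h : i ∈ s <;> simp [h]

lemma coordMap_injective (s : Finset ι) : Function.Injective (coordMap (ι := ι) s) := by
  intro c d h
  funext i
  have := congrFun h i.1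
  simpa [coordMap, i.2] using this

/-- Core inertia-counting lemma. -/
lemma core (P Q : Matrix ι ι ℝ) (hP : P.IsHermitian) (hQP : Q * P = 1)
    (S1 S2 : Submodule ℝ (ι → ℝ))
    (h1 : ∀ x ∈ S1, x ⬝ᵥ (P *ᵥ x) ≤ 0)
    (h2 : ∀ x ∈ S2, 0 ≤ x ⬝ᵥ (P *ᵥ x))
    (hdim : Fintype.card ι < Module.finrank ℝ S1 + Module.finrank ℝ S2) : False := by
  classical
  set U : Matrix ι ι ℝ := (hP.eigenvectorUnitary : Matrix ι ι ℝ) with hU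
  set lam := hP.eigenvalues with hlamdef
  have hmem := (hP.eigenvectorUnitary).2
  rw [Unitary.mem_iff] at hmem
  have hU1 : star U * U = 1 := hmem.1
  have hU2 : U * star U = 1 := hmem.2
  have hsU : star U = Uᵀ := by
    rw [star_eq_conjTranspose, conjTranspose_eq_transpose_of_trivial]
  have hspec : P = U * diagonal lam * star U := by
    have := hP.spectral_theorem
    rwa [RCLike.ofReal_real_eq_id, Function.id_comp] at this
  have hform : ∀ e : ι → ℝ, (U *ᵥ e) ⬝ᵥ (P *ᵥ (U *ᵥ e)) = ∑ i, lam i * (e i)^2 := by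
    intro e
    rw [sandwich_dot]
    have hkey : Uᵀ * P * U = diagonal lam := by
      rw [hspec, ← hsU]
      have h2' : star U * (U * diagonal lam * star U) * U
          = (star U * U) * diagonal lam * (star U * U) := by
        simp only [Matrix.mul_assoc]
      rw [h2', hU1, Matrix.one_mul, Matrix.mul_one]
    rw [hkey]
    simp only [dotProduct, mulVec_diagonal]
    exact Finset.sum_congr rfl fun i _ => by ring
  have hUinj : Function.Injective (fun v : ι → ℝ => U *ᵥ v) := by
    intro v w h
    have h' := congrArg (fun t => star U *ᵥ t) h
    simpa [mulVec_mulVec, hU1] using h'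
  -- eigenvalues are nonzero
  have hdet : IsUnit P.det := Matrix.isUnit_det_of_left_inverse hQP
  have hlam0 : ∀ i, lam i ≠ 0 := by
    intro i h0
    have hdp : P.det = ∏ j, lam j := by simpa using hP.det_eq_prod_eigenvalues
    rw [hdp, Finset.prod_eq_zero (Finset.mem_univ i) h0] at hdet
    simp at hdet
  set sp := Finset.univ.filter (fun i => 0 < lam i) with hspdef
  set sn := Finset.univ.filter (fun i => lam i < 0) with hsndef
  have hcards : sp.card + sn.card = Fintype.card ι := by
    have hsplit := Finset.card_filter_add_card_filter_not
      (s := (Finset.univ : Finset ι)) (p := fun i => 0 < lam i)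
    have he : Finset.univ.filter (fun i => ¬ 0 < lam i) = sn := by
      apply Finset.filter_congr
      intro i _
      simp only [not_lt]
      exact ⟨fun h => h.lt_of_ne (hlam0 i), le_of_lt⟩
    rw [he] at hsplit
    simpa using hsplit
  -- the eigen-subspaces
  set T : Finset ι → Submodule ℝ (ι → ℝ) :=
    fun s => LinearMap.range ((Matrix.mulVecLin U).comp (coordMap s)) with hTdef
  have hTdim : ∀ s : Finset ι, Module.finrank ℝ (T s) = s.card := by
    intro s
    rw [hTdef]
    rw [LinearMap.finrank_range_of_inj, Module.finrank_fintype_fun_eq_card, Fintype.card_coe]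
    intro c d h
    exact coordMap_injective s (hUinj (by simpa [Matrix.mulVecLin_apply] using h))
  have hTmem : ∀ (s : Finset ι) (x), x ∈ T s → ∃ c, x = U *ᵥ (coordMap s c) := by
    intro s x hx
    obtain ⟨c, hc⟩ := hx
    exact ⟨c, by simpa [Matrix.mulVecLin_apply] using hc.symm⟩
  have hcoord0 : ∀ (s : Finset ι) (c), ∀ i ∉ s, (coordMap s c) i = 0 := by
    intro s c i hi
    simp [coordMap, hi]
  have hcoordmem : ∀ (s : Finset ι) (c) (j : {i // i ∈ s}), (coordMap s c) j.1 = c j := by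
    intro s c j
    simp [coordMap, j.2]
  -- signs on eigen-subspaces
  have hsign : ∀ (s : Finset ι) (c : {i // i ∈ s} → ℝ), c ≠ 0 → ∃ j : {i // i ∈ s}, c j ≠ 0 ∧
      ∀ i ∉ s, lam i * ((coordMap s c) i)^2 = 0 := by
    intro s c hc
    obtain ⟨j, hj⟩ := Function.ne_iff.mp hc
    exact ⟨j, hj, fun i hi => by rw [hcoord0 s c i hi]; ring⟩
  have hpos : ∀ x ∈ T sp, x ≠ 0 → 0 < x ⬝ᵥ (P *ᵥ x) := by
    intro x hx hx0
    obtain ⟨c, hc⟩ := hTmem sp x hx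
    have hc0 : c ≠ 0 := by
      rintro rfl
      exact hx0 (by simp [hc])
    obtain ⟨j, hj, -⟩ := hsign sp c hc0
    rw [hc, hform]
    apply Finset.sum_pos'
    · intro i _
      by_cases h : i ∈ sp
      · have : 0 < lam i := (Finset.mem_filter.mp h).2
        positivity
      · rw [hcoord0 sp c i h]; simp
    · refine ⟨j.1, Finset.mem_univ _, ?_⟩
      rw [hcoordmem sp c j]
      have hl : 0 < lam j.1 := (Finset.mem_filter.mp j.2).2
      have : (0:ℝ) < (c j)^2 := by positivity
      exact mul_pos hl this
  have hneg : ∀ x ∈ T sn, x ≠ 0 → x ⬝ᵥ (P *ᵥ x) < 0 := by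
    intro x hx hx0
    obtain ⟨c, hc⟩ := hTmem sn x hx
    have hc0 : c ≠ 0 := by
      rintro rfl
      exact hx0 (by simp [hc])
    obtain ⟨j, hj, -⟩ := hsign sn c hc0
    rw [hc, hform]
    have hneg' : 0 < ∑ i, (-(lam i * ((coordMap sn c) i)^2)) := by
      apply Finset.sum_pos'
      · intro i _
        by_cases h : i ∈ sn
        · have : lam i < 0 := (Finset.mem_filter.mp h).2
          nlinarith [sq_nonneg ((coordMap sn c) i)]
        · rw [hcoord0 sn c i h]; simp
      · refine ⟨j.1, Finset.mem_univ _, ?_⟩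
        rw [hcoordmem sn c j]
        have hl : lam j.1 < 0 := (Finset.mem_filter.mp j.2).2
        have h2' : (0:ℝ) < (c j)^2 := by positivity
        nlinarith
    rw [Finset.sum_neg_distrib] at hneg'
    linarith
  -- disjointness and dimension count
  have hd1 : Disjoint S1 (T sp) := by
    rw [Submodule.disjoint_def]
    intro x hx1 hx2
    by_contra hx0
    exact absurd (h1 x hx1) (not_le.mpr (hpos x hx2 hx0))
  have hd2 : Disjoint S2 (T sn) := by
    rw [Submodule.disjoint_def]
    intro x hx1 hx2
    by_contra hx0
    exact absurd (h2 x hx1) (not_le.mpr (hneg x hx2 hx0))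
  have e1 := Submodule.finrank_add_finrank_le_of_disjoint hd1
  have e2 := Submodule.finrank_add_finrank_le_of_disjoint hd2
  rw [hTdim, Module.finrank_fintype_fun_eq_card] at e1 e2
  omega

/-- One direction of the dualization lemma. -/
lemma half {ι : Type*} [Fintype ι] [DecidableEq ι] {a b : ℕ}
    (P Q : Matrix ι ι ℝ) (hP : P.IsHermitian) (hPQ : P * Q = 1) (hQP : Q * P = 1)
    (V : Matrix ι (Fin a) ℝ) (W : Matrix ι (Fin b) ℝ)
    (hVinj : Function.Injective (fun d : Fin a → ℝ => V *ᵥ d))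
    (hWinj : Function.Injective (fun c : Fin b → ℝ => W *ᵥ c))
    (hWV : Wᵀ * V = 0)
    (hV : ∀ d : Fin a → ℝ, d ≠ 0 → 0 < d ⬝ᵥ ((Vᵀ * P * V) *ᵥ d))
    (S1 : Submodule ℝ (ι → ℝ)) (h1 : ∀ x ∈ S1, x ⬝ᵥ (P *ᵥ x) ≤ 0)
    (hs : Fintype.card ι < a + 1 + Module.finrank ℝ S1) :
    ∀ c : Fin b → ℝ, c ≠ 0 → c ⬝ᵥ ((Wᵀ * Q * W) *ᵥ c) < 0 := by
  intro c hc
  have hPt : Pᵀ = P := by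
    rw [← conjTranspose_eq_transpose_of_trivial]; exact hP
  have hQt : Qᵀ = Q := by
    have h1' : Qᵀ * P = 1 := by
      have h := congrArg Matrix.transpose hPQ
      rwa [Matrix.transpose_mul, hPt, Matrix.transpose_one] at h
    calc Qᵀ = Qᵀ * (P * Q) := by rw [hPQ, Matrix.mul_one]
      _ = (Qᵀ * P) * Q := by rw [Matrix.mul_assoc]
      _ = Q := by rw [h1', Matrix.one_mul]
  set w := W *ᵥ c with hwdef
  set x := Q *ᵥ w with hxdef
  have hPx : P *ᵥ x = w := by rw [hxdef, mulVec_mulVec, hPQ, one_mulVec]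
  have hw0 : w ≠ 0 := by
    intro h
    exact hc (hWinj (by simpa using h))
  have hx0 : x ≠ 0 := fun h => hw0 (by rw [← hPx, h, mulVec_zero])
  have hval : c ⬝ᵥ ((Wᵀ * Q * W) *ᵥ c) = x ⬝ᵥ (P *ᵥ x) := by
    rw [← sandwich_dot Q W W c c, hPx, hxdef, dotProduct_comm]
  have horth : ∀ d : Fin a → ℝ, x ⬝ᵥ (P *ᵥ (V *ᵥ d)) = 0 := by
    intro d
    have hx' : x = (Q * W) *ᵥ c := by rw [hxdef, hwdef, mulVec_mulVec]
    rw [hx', sandwich_dot]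
    have hz : (Q * W)ᵀ * P * V = 0 := by
      rw [Matrix.transpose_mul, hQt, Matrix.mul_assoc Wᵀ Q P, Matrix.mul_assoc Wᵀ (Q*P) V,
        hQP, Matrix.one_mul, hWV]
    rw [hz, zero_mulVec, dotProduct_zero]
  rw [hval]
  by_contra hlt
  push_neg at hlt  -- 0 ≤ x ⬝ᵥ P x  (hlt : 0 ≤ ...)
  -- the nonnegative subspace
  set S2 : Submodule ℝ (ι → ℝ) :=
    LinearMap.range (Matrix.mulVecLin V) ⊔ Submodule.span ℝ {x} with hS2def
  have hmemx : ∀ y ∈ S2, ∃ (d : Fin a → ℝ) (t : ℝ), y = V *ᵥ d + t • x := by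
    intro y hy
    rw [hS2def, Submodule.mem_sup] at hy
    obtain ⟨u, hu, v, hv, rfl⟩ := hy
    obtain ⟨d, hd⟩ := hu
    obtain ⟨t, ht⟩ := Submodule.mem_span_singleton.mp hv
    exact ⟨d, t, by rw [← hd, ← ht, Matrix.mulVecLin_apply]⟩
  have hVform : ∀ d : Fin a → ℝ, (V *ᵥ d) ⬝ᵥ (P *ᵥ (V *ᵥ d)) = d ⬝ᵥ ((Vᵀ * P * V) *ᵥ d) :=
    fun d => sandwich_dot P V V d d
  have h2 : ∀ y ∈ S2, 0 ≤ y ⬝ᵥ (P *ᵥ y) := by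
    intro y hy
    obtain ⟨d, t, rfl⟩ := hmemx y hy
    have e1 : (V *ᵥ d + t • x) ⬝ᵥ (P *ᵥ (V *ᵥ d + t • x))
        = (V *ᵥ d) ⬝ᵥ (P *ᵥ (V *ᵥ d)) + t * ((V *ᵥ d) ⬝ᵥ (P *ᵥ x))
          + t * (x ⬝ᵥ (P *ᵥ (V *ᵥ d))) + t * t * (x ⬝ᵥ (P *ᵥ x)) := by
      simp only [mulVec_add, mulVec_smul, dotProduct_add, add_dotProduct,
        dotProduct_smul, smul_dotProduct, smul_eq_mul]
      ring
    have e2 : (V *ᵥ d) ⬝ᵥ (P *ᵥ x) = 0 := by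
      rw [swap_mv, hPt]; exact horth d
    have e3 : 0 ≤ (V *ᵥ d) ⬝ᵥ (P *ᵥ (V *ᵥ d)) := by
      rcases eq_or_ne d 0 with rfl | hd0
      · simp
      · rw [hVform]; exact le_of_lt (hV d hd0)
    rw [e1, e2, horth d]
    nlinarith [hlt]
  -- dimension of S2
  have hxnot : x ∉ LinearMap.range (Matrix.mulVecLin V) := by
    intro hmem
    obtain ⟨d, hd⟩ := hmem
    rw [Matrix.mulVecLin_apply] at hd
    rcases eq_or_ne d 0 with rfl | hd0
    · rw [mulVec_zero] at hd; exact hx0 hd.symm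
    · have h0 : x ⬝ᵥ (P *ᵥ x) = 0 := by
        rw [show P *ᵥ x = P *ᵥ (V *ᵥ d) from by rw [hd]]
        exact horth d
      have := hV d hd0
      rw [← hVform, hd, h0] at this
      exact lt_irrefl _ this
  have hrV : Module.finrank ℝ (LinearMap.range (Matrix.mulVecLin V)) = a := by
    rw [LinearMap.finrank_range_of_inj, Module.finrank_fintype_fun_eq_card, Fintype.card_fin]
    intro u v huv
    exact hVinj (by simpa [Matrix.mulVecLin_apply] using huv)
  have hdisj : Disjoint (LinearMap.range (Matrix.mulVecLin V)) (Submodule.span ℝ {x}) :=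
    (Submodule.disjoint_span_singleton' hx0).mpr hxnot
  have hdim2 : Module.finrank ℝ S2 = a + 1 := by
    have := Submodule.finrank_sup_add_finrank_inf_eq
      (LinearMap.range (Matrix.mulVecLin V)) (Submodule.span ℝ {x})
    rw [hdisj.eq_bot, finrank_bot, add_zero, hrV, finrank_span_singleton hx0] at this
    rw [hS2def, this]
  exact core P Q hP hQP S1 S2 h1 h2 (by omega)

/-- Sandwich expansion for `fromRows`/`fromBlocks`. -/
lemma sand {k1 k2 k : Type*} [Fintype k1] [Fintype k2] [Fintype k]
    (M11 : Matrix k1 k1 ℝ) (M12 : Matrix k1 k2 ℝ) (M21 : Matrix k2 k1 ℝ) (M22 : Matrix k2 k2 ℝ)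
    (B : Matrix k1 k ℝ) (C : Matrix k2 k ℝ) :
    (fromRows B C)ᵀ * fromBlocks M11 M12 M21 M22 * fromRows B C
      = Bᵀ*M11*B + Bᵀ*M12*C + Cᵀ*M21*B + Cᵀ*M22*C := by
  rw [transpose_fromRows, fromCols_mul_fromBlocks, fromCols_mul_fromRows]
  simp only [Matrix.add_mul]
  abel

lemma finrank_range_mulVecLin {ι κ : Type*} [Fintype ι] [Fintype κ] (M : Matrix ι κ ℝ)
    (h : Function.Injective (fun v : κ → ℝ => M *ᵥ v)) :
    Module.finrank ℝ (LinearMap.range (Matrix.mulVecLin M)) = Fintype.card κ := by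
  rw [LinearMap.finrank_range_of_inj, Module.finrank_fintype_fun_eq_card]
  intro u v huv
  exact h (by simpa [Matrix.mulVecLin_apply] using huv)

end Stmt6Aux

open Stmt6Aux

/-- `M ≺ 0`: `M` is (symmetric) negative definite. -/
def IsNegDef {ι : Type*} [Fintype ι] (M : Matrix ι ι ℝ) : Prop :=
  (-M).PosDef

/-- Lemma 3 (dualization): under `Δ₁ ⪰ 0`, consistency of the data with a ground-truth
system, and invertibility of `[[−Δ̃₁, Δ̃₂],[Δ̃₂ᵀ, −Δ̃₃]]` with inverse
`[[Δ̄₁, Δ̄₂],[Δ̄₂ᵀ, Δ̄₃]]`, a matrix `A` satisfies the primal data-based condition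
`[Aᵀ;Iₙ]ᵀ [[Δ̃₁,Δ̃₂],[Δ̃₂ᵀ,Δ̃₃]] [Aᵀ;Iₙ] ≺ 0` iff it satisfies the dual one
`[I_ℓ;A]ᵀ [[Δ̄₁,Δ̄₂],[Δ̄₂ᵀ,Δ̄₃]] [I_ℓ;A] ≺ 0`; moreover `Δ̄₃ ⪰ 0`. -/
theorem stmt6 {n m ℓ D : ℕ}
    (z : Fin ℓ → MvPolynomial (Fin (n + m)) ℝ)
    (xp xd : Fin D → Fin n → ℝ) (ud : Fin D → Fin m → ℝ)
    (Δ1 : Matrix (Fin D) (Fin D) ℝ) (Δ2 : Matrix (Fin D) (Fin n) ℝ)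
    (Δ3 : Matrix (Fin n) (Fin n) ℝ)
    (hΔ1 : Δ1.PosSemidef)
    -- the evaluated monomial vectors `z(x̃ᵢ, ũᵢ)` and data matrices `X̃⁺`, `Z̃`
    (ζ : Fin D → Fin ℓ → ℝ)
    (hζ : ∀ i j, ζ i j = MvPolynomial.eval (Fin.append (xd i) (ud i)) (z j))
    (Xp : Matrix (Fin n) (Fin D) ℝ) (hXp : ∀ k i, Xp k i = xp i k)
    (Zt : Matrix (Fin ℓ) (Fin D) ℝ) (hZt : ∀ j i, Zt j i = ζ i j)
    -- the data-dependent matrices `Δ̃₁`, `Δ̃₂`, `Δ̃₃`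
    (Δt1 : Matrix (Fin ℓ) (Fin ℓ) ℝ) (hΔt1 : Δt1 = Zt * Δ1 * Ztᵀ)
    (Δt2 : Matrix (Fin ℓ) (Fin n) ℝ) (hΔt2 : Δt2 = -(Zt * (Δ1 * Xpᵀ + Δ2)))
    (Δt3 : Matrix (Fin n) (Fin n) ℝ)
    (hΔt3 : Δt3 = (Matrix.fromRows Xpᵀ (1 : Matrix (Fin n) (Fin n) ℝ))ᵀ *
        Matrix.fromBlocks Δ1 Δ2 Δ2ᵀ Δ3 *
        Matrix.fromRows Xpᵀ (1 : Matrix (Fin n) (Fin n) ℝ))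
    -- (ii) the data is consistent with a ground-truth system
    (hcons : ∃ (Agt : Matrix (Fin n) (Fin ℓ) ℝ) (Dm : Matrix (Fin n) (Fin D) ℝ),
        IsNegDef ((Matrix.fromRows Dmᵀ (1 : Matrix (Fin n) (Fin n) ℝ))ᵀ *
            Matrix.fromBlocks Δ1 Δ2 Δ2ᵀ Δ3 *
            Matrix.fromRows Dmᵀ (1 : Matrix (Fin n) (Fin n) ℝ)) ∧
        ∀ i, xp i = Agt.mulVec (ζ i) + fun k => Dm k i)
    -- (iii) invertibility, with inverse `[[Δ̄₁, Δ̄₂],[Δ̄₂ᵀ, Δ̄₃]]`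
    (Δb1 : Matrix (Fin ℓ) (Fin ℓ) ℝ) (Δb2 : Matrix (Fin ℓ) (Fin n) ℝ)
    (Δb3 : Matrix (Fin n) (Fin n) ℝ)
    (hinv : Matrix.fromBlocks (-Δt1) Δt2 Δt2ᵀ (-Δt3) *
          Matrix.fromBlocks Δb1 Δb2 Δb2ᵀ Δb3 = 1 ∧
        Matrix.fromBlocks Δb1 Δb2 Δb2ᵀ Δb3 *
          Matrix.fromBlocks (-Δt1) Δt2 Δt2ᵀ (-Δt3) = 1) :
    ((∀ A : Matrix (Fin n) (Fin ℓ) ℝ,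
        IsNegDef ((Matrix.fromRows Aᵀ (1 : Matrix (Fin n) (Fin n) ℝ))ᵀ *
            Matrix.fromBlocks Δt1 Δt2 Δt2ᵀ Δt3 *
            Matrix.fromRows Aᵀ (1 : Matrix (Fin n) (Fin n) ℝ)) ↔
        IsNegDef ((Matrix.fromRows (1 : Matrix (Fin ℓ) (Fin ℓ) ℝ) A)ᵀ *
            Matrix.fromBlocks Δb1 Δb2 Δb2ᵀ Δb3 *
            Matrix.fromRows (1 : Matrix (Fin ℓ) (Fin ℓ) ℝ) A)) ∧
      Δb3.PosSemidef) := by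
  obtain ⟨hPQ, hQP⟩ := hinv
  obtain ⟨Agt, Dm, hgt, hdyn⟩ := hcons
  have hΔ1t : Δ1ᵀ = Δ1 := by
    have h : Δ1ᴴ = Δ1 := hΔ1.1
    rwa [conjTranspose_eq_transpose_of_trivial] at h
  have hΔ1nn : ∀ v : Fin D → ℝ, 0 ≤ v ⬝ᵥ (Δ1 *ᵥ v) := by
    intro v; simpa using hΔ1.dotProduct_mulVec_nonneg v
  -- expanded form of Δt3
  have hΔt3' : Δt3 = Xp*Δ1*Xpᵀ + Xp*Δ2 + Δ2ᵀ*Xpᵀ + Δ3 := by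
    rw [hΔt3, Stmt6Aux.sand]
    simp [transpose_transpose, transpose_one, Matrix.mul_one, Matrix.one_mul]
  -- primal sandwich
  have hprim : ∀ A : Matrix (Fin n) (Fin ℓ) ℝ,
      (fromRows Aᵀ (1:Matrix (Fin n) (Fin n) ℝ))ᵀ * fromBlocks Δt1 Δt2 Δt2ᵀ Δt3 *
        fromRows Aᵀ (1:Matrix (Fin n) (Fin n) ℝ)
      = A*Δt1*Aᵀ + A*Δt2 + Δt2ᵀ*Aᵀ + Δt3 := by
    intro A
    rw [Stmt6Aux.sand]
    simp [transpose_transpose, transpose_one, Matrix.mul_one, Matrix.one_mul]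
  have hVPV : ∀ A : Matrix (Fin n) (Fin ℓ) ℝ,
      (fromRows Aᵀ (-1:Matrix (Fin n) (Fin n) ℝ))ᵀ * fromBlocks (-Δt1) Δt2 Δt2ᵀ (-Δt3) *
        fromRows Aᵀ (-1:Matrix (Fin n) (Fin n) ℝ)
      = -(A*Δt1*Aᵀ + A*Δt2 + Δt2ᵀ*Aᵀ + Δt3) := by
    intro A
    rw [Stmt6Aux.sand]
    simp only [transpose_transpose, transpose_neg, transpose_one, Matrix.mul_neg,
      Matrix.neg_mul, Matrix.mul_one, Matrix.one_mul, neg_neg, neg_add]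
  have hdataform : ∀ A : Matrix (Fin n) (Fin ℓ) ℝ,
      A*Δt1*Aᵀ + A*Δt2 + Δt2ᵀ*Aᵀ + Δt3
      = (Xp - A*Zt)*Δ1*(Xp - A*Zt)ᵀ + (Xp - A*Zt)*Δ2 + Δ2ᵀ*(Xp - A*Zt)ᵀ + Δ3 := by
    intro A
    rw [hΔt1, hΔt2, hΔt3']
    simp only [sub_eq_add_neg, transpose_add, transpose_neg, transpose_mul,
      transpose_transpose, hΔ1t, Matrix.mul_add, Matrix.add_mul, Matrix.mul_neg,
      Matrix.neg_mul, Matrix.mul_assoc, neg_neg, neg_add]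
    abel
  -- ground truth decomposition
  have hXpeq : Xp = Agt * Zt + Dm := by
    ext k i
    have h := congrFun (hdyn i) k
    simp only [Pi.add_apply] at h
    rw [hXp, h]
    simp [Matrix.mul_apply, Matrix.mulVec, dotProduct, hZt]
  have hDm : Xp - Agt * Zt = Dm := by rw [hXpeq, add_sub_cancel_left]
  -- expanded ground-truth negativity
  have hsndDm : ((fromRows Dmᵀ (1:Matrix (Fin n) (Fin n) ℝ))ᵀ * fromBlocks Δ1 Δ2 Δ2ᵀ Δ3 *
      fromRows Dmᵀ (1:Matrix (Fin n) (Fin n) ℝ)) = Dm*Δ1*Dmᵀ + Dm*Δ2 + Δ2ᵀ*Dmᵀ + Δ3 := by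
    rw [Stmt6Aux.sand]
    simp [transpose_transpose, transpose_one, Matrix.mul_one, Matrix.one_mul]
  have hgt2 : (-(Dm*Δ1*Dmᵀ + Dm*Δ2 + Δ2ᵀ*Dmᵀ + Δ3)).PosDef := by
    have h : (-((fromRows Dmᵀ (1:Matrix (Fin n) (Fin n) ℝ))ᵀ * fromBlocks Δ1 Δ2 Δ2ᵀ Δ3 *
        fromRows Dmᵀ (1:Matrix (Fin n) (Fin n) ℝ))).PosDef := hgt
    rwa [hsndDm] at h
  -- symmetry facts
  have hΔ3t : Δ3ᵀ = Δ3 := by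
    have h : (-(Dm*Δ1*Dmᵀ + Dm*Δ2 + Δ2ᵀ*Dmᵀ + Δ3))ᴴ
        = -(Dm*Δ1*Dmᵀ + Dm*Δ2 + Δ2ᵀ*Dmᵀ + Δ3) := hgt2.1
    rw [conjTranspose_eq_transpose_of_trivial, transpose_neg] at h
    have h2 := neg_injective h
    simp only [transpose_add, transpose_mul, transpose_transpose, hΔ1t,
      Matrix.mul_assoc] at h2
    -- h2 : Dm*(Δ1*Dmᵀ) + Δ2ᵀ*Dmᵀ + Dm*Δ2 + Δ3ᵀ = Dm*(Δ1*Dmᵀ) + Dm*Δ2 + Δ2ᵀ*Dmᵀ + Δ3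
    have h3 : Δ3ᵀ = (Dm*(Δ1*Dmᵀ) + Dm*Δ2 + Δ2ᵀ*Dmᵀ + Δ3)
        - (Dm*(Δ1*Dmᵀ) + Δ2ᵀ*Dmᵀ + Dm*Δ2) := by rw [← h2]; abel
    rw [h3]; abel
  have hΔt1t : Δt1ᵀ = Δt1 := by
    rw [hΔt1]
    simp [transpose_mul, transpose_transpose, hΔ1t, Matrix.mul_assoc]
  have hΔt3t : Δt3ᵀ = Δt3 := by
    rw [hΔt3']
    simp only [transpose_add, transpose_mul, transpose_transpose, hΔ1t, hΔ3t,
      Matrix.mul_assoc]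
    abel
  have hPt : (fromBlocks (-Δt1) Δt2 Δt2ᵀ (-Δt3))ᵀ = fromBlocks (-Δt1) Δt2 Δt2ᵀ (-Δt3) := by
    rw [fromBlocks_transpose, transpose_neg, transpose_neg, hΔt1t, hΔt3t, transpose_transpose]
  have hPH : (fromBlocks (-Δt1) Δt2 Δt2ᵀ (-Δt3)).IsHermitian := by
    show _ᴴ = _
    rw [conjTranspose_eq_transpose_of_trivial]; exact hPt
  have hQt : (fromBlocks Δb1 Δb2 Δb2ᵀ Δb3)ᵀ = fromBlocks Δb1 Δb2 Δb2ᵀ Δb3 := by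
    have h1' : (fromBlocks Δb1 Δb2 Δb2ᵀ Δb3)ᵀ * fromBlocks (-Δt1) Δt2 Δt2ᵀ (-Δt3) = 1 := by
      have h := congrArg Matrix.transpose hPQ
      rwa [Matrix.transpose_mul, hPt, Matrix.transpose_one] at h
    calc (fromBlocks Δb1 Δb2 Δb2ᵀ Δb3)ᵀ
        = (fromBlocks Δb1 Δb2 Δb2ᵀ Δb3)ᵀ * (fromBlocks (-Δt1) Δt2 Δt2ᵀ (-Δt3) *
          fromBlocks Δb1 Δb2 Δb2ᵀ Δb3) := by rw [hPQ, Matrix.mul_one]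
      _ = ((fromBlocks Δb1 Δb2 Δb2ᵀ Δb3)ᵀ * fromBlocks (-Δt1) Δt2 Δt2ᵀ (-Δt3)) *
          fromBlocks Δb1 Δb2 Δb2ᵀ Δb3 := by rw [Matrix.mul_assoc]
      _ = fromBlocks Δb1 Δb2 Δb2ᵀ Δb3 := by rw [h1', Matrix.one_mul]
  -- injectivity facts
  have hVAinj : ∀ A : Matrix (Fin n) (Fin ℓ) ℝ,
      Function.Injective (fun d : Fin n → ℝ =>
        fromRows Aᵀ (-1:Matrix (Fin n) (Fin n) ℝ) *ᵥ d) := by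
    intro A u v h
    simp only [fromRows_mulVec] at h
    have h3 : (-1 : Matrix (Fin n) (Fin n) ℝ) *ᵥ u = (-1 : Matrix (Fin n) (Fin n) ℝ) *ᵥ v :=
      funext fun k => congrFun h (Sum.inr k)
    simpa [Matrix.neg_mulVec, Matrix.one_mulVec, neg_inj] using h3
  have hWAinj : ∀ A : Matrix (Fin n) (Fin ℓ) ℝ,
      Function.Injective (fun c : Fin ℓ → ℝ =>
        fromRows (1:Matrix (Fin ℓ) (Fin ℓ) ℝ) A *ᵥ c) := by
    intro A u v h
    simp only [fromRows_mulVec] at h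
    have h3 : (1 : Matrix (Fin ℓ) (Fin ℓ) ℝ) *ᵥ u = (1 : Matrix (Fin ℓ) (Fin ℓ) ℝ) *ᵥ v :=
      funext fun k => congrFun h (Sum.inl k)
    simpa [Matrix.one_mulVec] using h3
  have hWV : ∀ A : Matrix (Fin n) (Fin ℓ) ℝ,
      (fromRows (1:Matrix (Fin ℓ) (Fin ℓ) ℝ) A)ᵀ *
        fromRows Aᵀ (-1:Matrix (Fin n) (Fin n) ℝ) = 0 := by
    intro A
    rw [transpose_fromRows, fromCols_mul_fromRows]
    simp
  -- ground truth positivity of Vgtᵀ P Vgt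
  have hgtP : ((fromRows Agtᵀ (-1:Matrix (Fin n) (Fin n) ℝ))ᵀ *
      fromBlocks (-Δt1) Δt2 Δt2ᵀ (-Δt3) *
      fromRows Agtᵀ (-1:Matrix (Fin n) (Fin n) ℝ)).PosDef := by
    rw [hVPV Agt, hdataform Agt, hDm]
    exact hgt2
  -- S1 : the nonpositive subspace {(y, 0)}
  have hJ1inj : Function.Injective (fun c : Fin ℓ → ℝ =>
      fromRows (1:Matrix (Fin ℓ) (Fin ℓ) ℝ) (0:Matrix (Fin n) (Fin ℓ) ℝ) *ᵥ c) := by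
    intro u v h
    simp only [fromRows_mulVec] at h
    have h3 : (1 : Matrix (Fin ℓ) (Fin ℓ) ℝ) *ᵥ u = (1 : Matrix (Fin ℓ) (Fin ℓ) ℝ) *ᵥ v :=
      funext fun k => congrFun h (Sum.inl k)
    simpa [Matrix.one_mulVec] using h3
  have hJ1form : (fromRows (1:Matrix (Fin ℓ) (Fin ℓ) ℝ) (0:Matrix (Fin n) (Fin ℓ) ℝ))ᵀ *
      fromBlocks (-Δt1) Δt2 Δt2ᵀ (-Δt3) *
      fromRows (1:Matrix (Fin ℓ) (Fin ℓ) ℝ) (0:Matrix (Fin n) (Fin ℓ) ℝ)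
      = -(Zt*Δ1*Ztᵀ) := by
    rw [Stmt6Aux.sand, ← hΔt1]
    simp [transpose_one, transpose_zero, Matrix.mul_zero, Matrix.zero_mul,
      Matrix.one_mul, Matrix.mul_one]
  have h1S : ∀ x ∈ LinearMap.range (Matrix.mulVecLin
        (fromRows (1:Matrix (Fin ℓ) (Fin ℓ) ℝ) (0:Matrix (Fin n) (Fin ℓ) ℝ))),
      x ⬝ᵥ ((fromBlocks (-Δt1) Δt2 Δt2ᵀ (-Δt3)) *ᵥ x) ≤ 0 := by
    rintro x ⟨c, rfl⟩
    rw [Matrix.mulVecLin_apply, Stmt6Aux.sandwich_dot, hJ1form, neg_mulVec, dotProduct_neg,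
      neg_nonpos]
    have h := Stmt6Aux.sandwich_dot Δ1 Ztᵀ Ztᵀ c c
    rw [transpose_transpose] at h
    rw [← h]
    exact hΔ1nn _
  have hdimS1 : Module.finrank ℝ (LinearMap.range (Matrix.mulVecLin
      (fromRows (1:Matrix (Fin ℓ) (Fin ℓ) ℝ) (0:Matrix (Fin n) (Fin ℓ) ℝ)))) = ℓ := by
    rw [Stmt6Aux.finrank_range_mulVecLin _ hJ1inj, Fintype.card_fin]
  -- S1' : the nonpositive subspace for -Q
  have hPVgtinj : Function.Injective (fun d : Fin n → ℝ =>
      (fromBlocks (-Δt1) Δt2 Δt2ᵀ (-Δt3) *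
        fromRows Agtᵀ (-1:Matrix (Fin n) (Fin n) ℝ)) *ᵥ d) := by
    intro u v h
    simp only [← mulVec_mulVec] at h
    have h2 := congrArg (fun t => (fromBlocks Δb1 Δb2 Δb2ᵀ Δb3) *ᵥ t) h
    simp only [mulVec_mulVec, ← Matrix.mul_assoc, hQP, Matrix.one_mul] at h2
    exact hVAinj Agt h2
  have hdimS1' : Module.finrank ℝ (LinearMap.range (Matrix.mulVecLin
      (fromBlocks (-Δt1) Δt2 Δt2ᵀ (-Δt3) *
        fromRows Agtᵀ (-1:Matrix (Fin n) (Fin n) ℝ)))) = n := by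
    rw [Stmt6Aux.finrank_range_mulVecLin _ hPVgtinj, Fintype.card_fin]
  have hS1'mat : (fromBlocks (-Δt1) Δt2 Δt2ᵀ (-Δt3) *
        fromRows Agtᵀ (-1:Matrix (Fin n) (Fin n) ℝ))ᵀ *
      (-(fromBlocks Δb1 Δb2 Δb2ᵀ Δb3)) *
      (fromBlocks (-Δt1) Δt2 Δt2ᵀ (-Δt3) * fromRows Agtᵀ (-1:Matrix (Fin n) (Fin n) ℝ))
      = -((fromRows Agtᵀ (-1:Matrix (Fin n) (Fin n) ℝ))ᵀ *
          fromBlocks (-Δt1) Δt2 Δt2ᵀ (-Δt3) *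
          fromRows Agtᵀ (-1:Matrix (Fin n) (Fin n) ℝ)) := by
    rw [Matrix.transpose_mul, hPt]
    simp only [Matrix.mul_neg, Matrix.neg_mul, neg_neg, neg_inj, ← Matrix.mul_assoc]
    rw [Matrix.mul_assoc ((fromRows Agtᵀ (-1:Matrix (Fin n) (Fin n) ℝ))ᵀ *
        fromBlocks (-Δt1) Δt2 Δt2ᵀ (-Δt3)) (fromBlocks Δb1 Δb2 Δb2ᵀ Δb3)
        (fromBlocks (-Δt1) Δt2 Δt2ᵀ (-Δt3)),
      hQP, Matrix.mul_one]
  have h1S' : ∀ x ∈ LinearMap.range (Matrix.mulVecLin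
        (fromBlocks (-Δt1) Δt2 Δt2ᵀ (-Δt3) *
          fromRows Agtᵀ (-1:Matrix (Fin n) (Fin n) ℝ))),
      x ⬝ᵥ ((-(fromBlocks Δb1 Δb2 Δb2ᵀ Δb3)) *ᵥ x) ≤ 0 := by
    rintro x ⟨c, rfl⟩
    rw [Matrix.mulVecLin_apply, Stmt6Aux.sandwich_dot, hS1'mat, neg_mulVec, dotProduct_neg,
      neg_nonpos]
    simpa using hgtP.posSemidef.dotProduct_mulVec_nonneg c
  have hcardsum : Fintype.card (Fin ℓ ⊕ Fin n) = ℓ + n := by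
    simp [Fintype.card_sum]
  -- the main iff
  refine ⟨fun A => ?_, ?_⟩
  · constructor
    · intro hprimal
      have hprimal' : (-(A*Δt1*Aᵀ + A*Δt2 + Δt2ᵀ*Aᵀ + Δt3)).PosDef := by
        have h : (-((fromRows Aᵀ (1:Matrix (Fin n) (Fin n) ℝ))ᵀ *
            fromBlocks Δt1 Δt2 Δt2ᵀ Δt3 *
            fromRows Aᵀ (1:Matrix (Fin n) (Fin n) ℝ))).PosDef := hprimal
        rwa [hprim A] at h
      have hVpos : ∀ d : Fin n → ℝ, d ≠ 0 →
          0 < d ⬝ᵥ (((fromRows Aᵀ (-1:Matrix (Fin n) (Fin n) ℝ))ᵀ *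
            fromBlocks (-Δt1) Δt2 Δt2ᵀ (-Δt3) *
            fromRows Aᵀ (-1:Matrix (Fin n) (Fin n) ℝ)) *ᵥ d) := by
        intro d hd
        rw [hVPV A]
        simpa using hprimal'.dotProduct_mulVec_pos hd
      have hconc := Stmt6Aux.half (fromBlocks (-Δt1) Δt2 Δt2ᵀ (-Δt3))
        (fromBlocks Δb1 Δb2 Δb2ᵀ Δb3) hPH hPQ hQP
        (fromRows Aᵀ (-1:Matrix (Fin n) (Fin n) ℝ))
        (fromRows (1:Matrix (Fin ℓ) (Fin ℓ) ℝ) A)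
        (hVAinj A) (hWAinj A) (hWV A) hVpos _ h1S (by rw [hdimS1, hcardsum]; omega)
      refine Matrix.PosDef.of_dotProduct_mulVec_pos ?_ ?_
      · show _ᴴ = _
        rw [conjTranspose_eq_transpose_of_trivial, transpose_neg, neg_inj]
        rw [Matrix.transpose_mul, Matrix.transpose_mul, transpose_transpose, hQt,
          Matrix.mul_assoc]
      · intro x hx
        have h := hconc x hx
        simp only [star_trivial, neg_mulVec, dotProduct_neg]
        linarith
    · intro hdual
      have hWQ : ∀ c : Fin ℓ → ℝ, c ≠ 0 →
          0 < c ⬝ᵥ (((fromRows (1:Matrix (Fin ℓ) (Fin ℓ) ℝ) A)ᵀ *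
            (-(fromBlocks Δb1 Δb2 Δb2ᵀ Δb3)) *
            fromRows (1:Matrix (Fin ℓ) (Fin ℓ) ℝ) A) *ᵥ c) := by
        intro c hc
        have h : (-((fromRows (1:Matrix (Fin ℓ) (Fin ℓ) ℝ) A)ᵀ *
            fromBlocks Δb1 Δb2 Δb2ᵀ Δb3 *
            fromRows (1:Matrix (Fin ℓ) (Fin ℓ) ℝ) A)).PosDef := hdual
        have h2 := h.dotProduct_mulVec_pos hc
        simp only [star_trivial] at h2
        rw [Matrix.mul_neg, Matrix.neg_mul]
        exact h2
      have hnQH : (-(fromBlocks Δb1 Δb2 Δb2ᵀ Δb3)).IsHermitian := by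
        show _ᴴ = _
        rw [conjTranspose_eq_transpose_of_trivial, transpose_neg, hQt]
      have hVW : (fromRows Aᵀ (-1:Matrix (Fin n) (Fin n) ℝ))ᵀ *
          fromRows (1:Matrix (Fin ℓ) (Fin ℓ) ℝ) A = 0 := by
        have h := congrArg Matrix.transpose (hWV A)
        rwa [Matrix.transpose_mul, transpose_transpose, transpose_zero] at h
      have hconc := Stmt6Aux.half (-(fromBlocks Δb1 Δb2 Δb2ᵀ Δb3))
        (-(fromBlocks (-Δt1) Δt2 Δt2ᵀ (-Δt3))) hnQH
        (by rw [neg_mul_neg]; exact hQP) (by rw [neg_mul_neg]; exact hPQ)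
        (fromRows (1:Matrix (Fin ℓ) (Fin ℓ) ℝ) A)
        (fromRows Aᵀ (-1:Matrix (Fin n) (Fin n) ℝ))
        (hWAinj A) (hVAinj A) hVW hWQ _ h1S' (by rw [hdimS1', hcardsum]; omega)
      show (-((fromRows Aᵀ (1:Matrix (Fin n) (Fin n) ℝ))ᵀ *
          fromBlocks Δt1 Δt2 Δt2ᵀ Δt3 *
          fromRows Aᵀ (1:Matrix (Fin n) (Fin n) ℝ))).PosDef
      rw [hprim A, ← hVPV A]
      refine Matrix.PosDef.of_dotProduct_mulVec_pos ?_ ?_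
      · show _ᴴ = _
        rw [conjTranspose_eq_transpose_of_trivial]
        rw [Matrix.transpose_mul, Matrix.transpose_mul, transpose_transpose, hPt,
          Matrix.mul_assoc]
      · intro d hd
        have h := hconc d hd
        rw [Matrix.mul_neg, Matrix.neg_mul, neg_mulVec, dotProduct_neg] at h
        simp only [star_trivial]
        linarith
  -- positive semidefiniteness of Δb3
  · have hb3t : Δb3ᵀ = Δb3 := by
      have h := hQt
      rw [fromBlocks_transpose] at h
      have h2 := congrArg Matrix.toBlocks₂₂ h
      simpa [Matrix.toBlocks_fromBlocks₂₂] using h2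
    refine Matrix.PosSemidef.of_dotProduct_mulVec_nonneg ?_ ?_
    · show _ᴴ = _
      rw [conjTranspose_eq_transpose_of_trivial]; exact hb3t
    intro x
    simp only [star_trivial]
    -- e = (0, x)
    set e : Fin ℓ ⊕ Fin n → ℝ := Sum.elim (0 : Fin ℓ → ℝ) x with hedef
    have he : x ⬝ᵥ (Δb3 *ᵥ x) = e ⬝ᵥ ((fromBlocks Δb1 Δb2 Δb2ᵀ Δb3) *ᵥ e) := by
      rw [hedef, fromBlocks_mulVec]
      simp [sumElim_dotProduct_sumElim]
    rw [he]
    set y : Fin ℓ ⊕ Fin n → ℝ := (fromBlocks Δb1 Δb2 Δb2ᵀ Δb3) *ᵥ e with hydef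
    have hPy : (fromBlocks (-Δt1) Δt2 Δt2ᵀ (-Δt3)) *ᵥ y = e := by
      rw [hydef, mulVec_mulVec, hPQ, one_mulVec]
    have he2 : e ⬝ᵥ y = y ⬝ᵥ ((fromBlocks (-Δt1) Δt2 Δt2ᵀ (-Δt3)) *ᵥ y) := by
      conv_lhs => rw [← hPy]
      rw [dotProduct_comm]
    rw [he2]
    set y1 : Fin ℓ → ℝ := y ∘ Sum.inl with hy1def
    set y2 : Fin n → ℝ := y ∘ Sum.inr with hy2def
    have hysum : y = Sum.elim y1 y2 := by
      funext i; cases i <;> rfl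
    have hcon : (-Δt1) *ᵥ y1 + Δt2 *ᵥ y2 = 0 := by
      have h := hPy
      rw [hysum, fromBlocks_mulVec] at h
      funext j
      have h2 := congrFun h (Sum.inl j)
      simpa [hedef] using h2
    have hr : y ⬝ᵥ ((fromBlocks (-Δt1) Δt2 Δt2ᵀ (-Δt3)) *ᵥ y)
        = y1 ⬝ᵥ ((-Δt1) *ᵥ y1) + y1 ⬝ᵥ (Δt2 *ᵥ y2) + y2 ⬝ᵥ (Δt2ᵀ *ᵥ y1)
          + y2 ⬝ᵥ ((-Δt3) *ᵥ y2) := by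
      conv_lhs => rw [hysum]
      rw [fromBlocks_mulVec, sumElim_dotProduct_sumElim,
        dotProduct_add, dotProduct_add]
      simp only [Sum.elim_comp_inl, Sum.elim_comp_inr]
      ring
    set a : Fin D → ℝ := Ztᵀ *ᵥ y1 with hadef
    set b : Fin D → ℝ := Xpᵀ *ᵥ y2 with hbdef
    set w2 : Fin D → ℝ := Dmᵀ *ᵥ y2 with hw2def
    set t : Fin D → ℝ := Ztᵀ *ᵥ (y1 + Agtᵀ *ᵥ y2) with htdef
    have e1 : y1 ⬝ᵥ ((-Δt1) *ᵥ y1) = -(a ⬝ᵥ (Δ1 *ᵥ a)) := by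
      rw [hΔt1, neg_mulVec, dotProduct_neg, neg_inj]
      have h := Stmt6Aux.sandwich_dot Δ1 Ztᵀ Ztᵀ y1 y1
      rw [transpose_transpose] at h
      rw [← h, ← hadef]
    have e2 : y1 ⬝ᵥ (Δt2 *ᵥ y2) = -(a ⬝ᵥ (Δ1 *ᵥ b)) - a ⬝ᵥ (Δ2 *ᵥ y2) := by
      rw [hΔt2, neg_mulVec, dotProduct_neg]
      rw [show (Zt * (Δ1 * Xpᵀ + Δ2)) *ᵥ y2 = Zt *ᵥ (Δ1 *ᵥ (Xpᵀ *ᵥ y2) + Δ2 *ᵥ y2) by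
        simp [← mulVec_mulVec, Matrix.add_mulVec, Matrix.mulVec_add]]
      rw [Stmt6Aux.dot_mv Zt, ← hadef, ← hbdef, dotProduct_add]
      ring
    have e3 : y2 ⬝ᵥ (Δt2ᵀ *ᵥ y1) = y1 ⬝ᵥ (Δt2 *ᵥ y2) := by
      rw [Stmt6Aux.swap_mv, transpose_transpose]
    have e4 : y2 ⬝ᵥ ((-Δt3) *ᵥ y2)
        = -(b ⬝ᵥ (Δ1 *ᵥ b)) - 2*(b ⬝ᵥ (Δ2 *ᵥ y2)) - y2 ⬝ᵥ (Δ3 *ᵥ y2) := by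
      rw [neg_mulVec, dotProduct_neg, hΔt3']
      simp only [Matrix.add_mulVec, dotProduct_add]
      have t1 : y2 ⬝ᵥ ((Xp*Δ1*Xpᵀ) *ᵥ y2) = b ⬝ᵥ (Δ1 *ᵥ b) := by
        have h := Stmt6Aux.sandwich_dot Δ1 Xpᵀ Xpᵀ y2 y2
        rw [transpose_transpose] at h
        rw [← h, ← hbdef]
      have t2 : y2 ⬝ᵥ ((Xp*Δ2) *ᵥ y2) = b ⬝ᵥ (Δ2 *ᵥ y2) := by
        rw [← mulVec_mulVec, Stmt6Aux.dot_mv Xp, ← hbdef]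
      have t3 : y2 ⬝ᵥ ((Δ2ᵀ*Xpᵀ) *ᵥ y2) = b ⬝ᵥ (Δ2 *ᵥ y2) := by
        rw [← mulVec_mulVec, ← hbdef, Stmt6Aux.swap_mv, transpose_transpose]
      rw [t1, t2, t3]; ring
    have hconZ : Zt *ᵥ (Δ1 *ᵥ (a + b) + Δ2 *ᵥ y2) = 0 := by
      have h := hcon
      rw [hΔt1, hΔt2] at h
      have h2 : Zt *ᵥ (Δ1 *ᵥ (a + b) + Δ2 *ᵥ y2)
          = -((-(Zt*Δ1*Ztᵀ)) *ᵥ y1 + (-(Zt*(Δ1*Xpᵀ+Δ2))) *ᵥ y2) := by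
        rw [hadef, hbdef]
        simp only [neg_mulVec, ← mulVec_mulVec, Matrix.add_mulVec, Matrix.mulVec_add,
          neg_add, neg_neg]
        abel
      rw [h2, h, neg_zero]
    have hts : t ⬝ᵥ (Δ1 *ᵥ (a + b)) + t ⬝ᵥ (Δ2 *ᵥ y2) = 0 := by
      have h := Stmt6Aux.dot_mv Zt (y1 + Agtᵀ *ᵥ y2) (Δ1 *ᵥ (a + b) + Δ2 *ᵥ y2)
      rw [hconZ, dotProduct_zero, ← htdef, dotProduct_add] at h
      linarith
    have hswt : a + b = w2 + t := by
      rw [hadef, hbdef, hw2def, htdef, hXpeq]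
      simp only [transpose_add, transpose_mul, Matrix.add_mulVec, Matrix.mulVec_add,
        ← mulVec_mulVec]
      abel
    have hd1sym : ∀ u v : Fin D → ℝ, u ⬝ᵥ (Δ1 *ᵥ v) = v ⬝ᵥ (Δ1 *ᵥ u) := by
      intro u v; rw [Stmt6Aux.swap_mv, hΔ1t]
    have hS1a : (a+b) ⬝ᵥ (Δ1 *ᵥ (a+b))
        = a ⬝ᵥ (Δ1 *ᵥ a) + 2*(a ⬝ᵥ (Δ1 *ᵥ b)) + b ⬝ᵥ (Δ1 *ᵥ b) := by
      simp only [Matrix.mulVec_add, dotProduct_add, add_dotProduct]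
      rw [hd1sym b a]; ring
    have hS1wt : (a+b) ⬝ᵥ (Δ1 *ᵥ (a+b))
        = w2 ⬝ᵥ (Δ1 *ᵥ w2) + 2*(t ⬝ᵥ (Δ1 *ᵥ w2)) + t ⬝ᵥ (Δ1 *ᵥ t) := by
      rw [hswt]
      simp only [Matrix.mulVec_add, dotProduct_add, add_dotProduct]
      rw [hd1sym w2 t]; ring
    have hS2a : (a+b) ⬝ᵥ (Δ2 *ᵥ y2) = a ⬝ᵥ (Δ2 *ᵥ y2) + b ⬝ᵥ (Δ2 *ᵥ y2) := by
      simp [add_dotProduct]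
    have hS2wt : (a+b) ⬝ᵥ (Δ2 *ᵥ y2) = w2 ⬝ᵥ (Δ2 *ᵥ y2) + t ⬝ᵥ (Δ2 *ᵥ y2) := by
      rw [hswt]; simp [add_dotProduct]
    have htD1s : t ⬝ᵥ (Δ1 *ᵥ (a+b)) = t ⬝ᵥ (Δ1 *ᵥ w2) + t ⬝ᵥ (Δ1 *ᵥ t) := by
      rw [hswt]; simp [Matrix.mulVec_add, dotProduct_add]
    have hg : w2 ⬝ᵥ (Δ1 *ᵥ w2) + 2*(w2 ⬝ᵥ (Δ2 *ᵥ y2)) + y2 ⬝ᵥ (Δ3 *ᵥ y2) ≤ 0 := by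
      have h := hgt2.posSemidef.dotProduct_mulVec_nonneg y2
      simp only [star_trivial, neg_mulVec, dotProduct_neg] at h
      have h2 : y2 ⬝ᵥ ((Dm*Δ1*Dmᵀ + Dm*Δ2 + Δ2ᵀ*Dmᵀ + Δ3) *ᵥ y2)
          = w2 ⬝ᵥ (Δ1 *ᵥ w2) + 2*(w2 ⬝ᵥ (Δ2 *ᵥ y2)) + y2 ⬝ᵥ (Δ3 *ᵥ y2) := by
        simp only [Matrix.add_mulVec, dotProduct_add]
        have u1 : y2 ⬝ᵥ ((Dm*Δ1*Dmᵀ) *ᵥ y2) = w2 ⬝ᵥ (Δ1 *ᵥ w2) := by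
          have hh := Stmt6Aux.sandwich_dot Δ1 Dmᵀ Dmᵀ y2 y2
          rw [transpose_transpose] at hh
          rw [← hh, ← hw2def]
        have u2 : y2 ⬝ᵥ ((Dm*Δ2) *ᵥ y2) = w2 ⬝ᵥ (Δ2 *ᵥ y2) := by
          rw [← mulVec_mulVec, Stmt6Aux.dot_mv Dm, ← hw2def]
        have u3 : y2 ⬝ᵥ ((Δ2ᵀ*Dmᵀ) *ᵥ y2) = w2 ⬝ᵥ (Δ2 *ᵥ y2) := by
          rw [← mulVec_mulVec, ← hw2def, Stmt6Aux.swap_mv, transpose_transpose]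
        rw [u1, u2, u3]; ring
      linarith
    have hB1 : 0 ≤ t ⬝ᵥ (Δ1 *ᵥ t) := hΔ1nn t
    rw [hr, e3, e2, e1, e4]
    linarith [hS1a, hS1wt, hS2a, hS2wt, htD1s, hts, hg, hB1]
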